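/- Succinctness of reconfigurable semantics, lower bound for lossy executions: for every n ≥ 1, every lossy execution of the broadcast protocol P_n covering {☺} has at least n + 1 nodes. -/

import Mathlib

/-- A broadcast protocol over finite state set `Q` and finite message alphabet `M`.
`I` is the set of initial states, `br q m q'` means `(q, !!m, q') ∈ Δ` (a broadcast
transition) and `rcv q m q'` means `(q, ??m, q') ∈ Δ` (a reception transition).
The protocol is complete for receptions. -/
structure BroadcastProtocol (Q M : Type) [Fintype Q] [DecidableEq Q] [Fintype M] where
  I : Finset Q
  br : Q → M → Q → Prop
  rcv : Q → M → Q → Prop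
  complete : ∀ q m, ∃ q', rcv q m q'

section Execs
variable {Q M : Type} [Fintype Q] [DecidableEq Q] [Fintype M]

/-- A lossy execution of length `r` over the finite node type `ν`: the communication
topology `E` is fixed throughout, and in the `i`-th step node `sender i` broadcasts
message `msg i`, which is lost (reaching no node) iff `lost i = true`. -/
structure LExec (P : BroadcastProtocol Q M) (ν : Type) [Fintype ν] [DecidableEq ν]
    (r : ℕ) where
  lab : Fin (r + 1) → ν → Q
  E : ν → ν → Prop
  E_symm : Symmetric E
  E_irrefl : Irreflexive E
  sender : Fin r → ν
  msg : Fin r → M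
  lost : Fin r → Bool
  init : ∀ v, lab 0 v ∈ P.I
  step_br : ∀ i : Fin r, P.br (lab i.castSucc (sender i)) (msg i) (lab i.succ (sender i))
  step_lost : ∀ i : Fin r, lost i = true → ∀ v, v ≠ sender i →
    lab i.succ v = lab i.castSucc v
  step_real : ∀ i : Fin r, lost i = false → ∀ v, v ≠ sender i →
    (E (sender i) v → P.rcv (lab i.castSucc v) (msg i) (lab i.succ v)) ∧
    (¬ E (sender i) v → lab i.succ v = lab i.castSucc v)

namespace LExec

variable {P : BroadcastProtocol Q M} {ν : Type} [Fintype ν] [DecidableEq ν] {r : ℕ}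

/-- Labelling of the last configuration. -/
def lastLab (ρ : LExec P ν r) : ν → Q := ρ.lab (Fin.last r)

/-- The execution covers `F` if a node of the last configuration is labelled in `F`. -/
def Covers (ρ : LExec P ν r) (F : Set Q) : Prop := ∃ v, ρ.lastLab v ∈ F

/-- The active length of node `v`: the number of broadcasts (lost or not) of `v`. -/
def activeLen (ρ : LExec P ν r) (v : ν) : ℕ :=
  (Finset.univ.filter fun i : Fin r => ρ.sender i = v).card

/-- The real active length of node `v`: the number of non-lost broadcasts of `v`. -/
def realActiveLen (ρ : LExec P ν r) (v : ν) : ℕ :=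
  (Finset.univ.filter fun i : Fin r => ρ.sender i = v ∧ ρ.lost i = false).card

end LExec

end Execs
/- ## The protocol P_n (succinctness) -/

abbrev PnQ (n : ℕ) := Fin (2 * n + 1) ⊕ (Fin n ⊕ Unit)
abbrev PnM (n : ℕ) := Option (Fin n)

def PnBr (n : ℕ) : PnQ n → PnM n → PnQ n → Prop
  | .inl k, none, q' => (k : ℕ) = 0 ∧ q' = .inl k
  | .inl k, some i, q' =>
      (k : ℕ) = 2 * (i : ℕ) + 1 ∧ ∃ h : (k : ℕ) + 1 < 2 * n + 1, q' = .inl ⟨(k : ℕ) + 1, h⟩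
  | _, _, _ => False

def PnRcv (n : ℕ) : PnQ n → PnM n → PnQ n → Prop
  | .inl k, none, q' =>
      ((k : ℕ) % 2 = 0 ∧ ∃ _h : (k : ℕ) < 2 * n, q' = Sum.inl ⟨(k : ℕ) + 1, by omega⟩)
      ∨ (¬ ((k : ℕ) % 2 = 0 ∧ (k : ℕ) < 2 * n) ∧ q' = .inl k)
  | .inl k, some i, q' =>
      ((k : ℕ) = 0 ∧ q' = .inr (.inr ()))
      ∨ ((k : ℕ) = 0 ∧ (i : ℕ) = 0 ∧ q' = .inr (.inl ⟨0, Fin.pos i⟩))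
      ∨ ((k : ℕ) ≠ 0 ∧ q' = .inl k)
  | .inr (.inl j), none, q' => q' = .inr (.inl j)
  | .inr (.inl j), some i, q' =>
      ((i : ℕ) = (j : ℕ) + 1 ∧ ∃ h : (j : ℕ) + 1 < n, q' = .inr (.inl ⟨(j : ℕ) + 1, h⟩))
      ∨ ((i : ℕ) ≠ (j : ℕ) + 1 ∧ q' = .inr (.inl j))
  | .inr (.inr _), _, q' => q' = .inr (.inr ())

def PnProt (n : ℕ) : BroadcastProtocol (PnQ n) (PnM n) where
  I := {Sum.inl (0 : Fin (2 * n + 1))}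
  br := PnBr n
  rcv := PnRcv n
  complete := by
    rintro (k | j | u) (_ | i)
    · by_cases h : (k : ℕ) % 2 = 0 ∧ (k : ℕ) < 2 * n
      · exact ⟨Sum.inl ⟨(k : ℕ) + 1, by omega⟩, Or.inl ⟨h.1, h.2, rfl⟩⟩
      · exact ⟨Sum.inl k, Or.inr ⟨h, rfl⟩⟩
    · by_cases h : (k : ℕ) = 0
      · exact ⟨Sum.inr (Sum.inr ()), Or.inl ⟨h, rfl⟩⟩
      · exact ⟨Sum.inl k, Or.inr (Or.inr ⟨h, rfl⟩)⟩
    · exact ⟨Sum.inr (Sum.inl j), rfl⟩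
    · by_cases h : (i : ℕ) = (j : ℕ) + 1
      · exact ⟨Sum.inr (Sum.inl ⟨(j : ℕ) + 1, by have := i.isLt; omega⟩),
          Or.inl ⟨h, by have := i.isLt; omega, rfl⟩⟩
      · exact ⟨Sum.inr (Sum.inl j), Or.inr ⟨h, rfl⟩⟩
    · exact ⟨Sum.inr (Sum.inr ()), rfl⟩
    · exact ⟨Sum.inr (Sum.inr ()), rfl⟩

def PnSmiley (n : ℕ) (hn : 1 ≤ n) : PnQ n := Sum.inr (Sum.inl ⟨n - 1, by omega⟩)


section AuxLemmas
variable {n : ℕ} {ν : Type} [Fintype ν] [DecidableEq ν] {r : ℕ}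
variable (ρ : LExec (PnProt n) ν r)

/-- Trichotomy for what can happen to a node in one step. -/
lemma pn_step_cases (i : Fin r) (v : ν) :
    (v = ρ.sender i ∧ PnBr n (ρ.lab i.castSucc v) (ρ.msg i) (ρ.lab i.succ v))
    ∨ ρ.lab i.succ v = ρ.lab i.castSucc v
    ∨ (v ≠ ρ.sender i ∧ ρ.lost i = false ∧ ρ.E (ρ.sender i) v ∧
        PnRcv n (ρ.lab i.castSucc v) (ρ.msg i) (ρ.lab i.succ v)) := by
  by_cases hv : v = ρ.sender i
  · exact Or.inl ⟨hv, by have := ρ.step_br i; rwa [← hv] at this⟩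
  · cases hl : ρ.lost i with
    | true => exact Or.inr (Or.inl (ρ.step_lost i hl v hv))
    | false =>
      by_cases hE : ρ.E (ρ.sender i) v
      · exact Or.inr (Or.inr ⟨hv, rfl, hE, (ρ.step_real i hl v hv).1 hE⟩)
      · exact Or.inr (Or.inl ((ρ.step_real i hl v hv).2 hE))

/-- `q₀` is never (re-)entered: one-step backward persistence. -/
lemma pn_q0_step (i : Fin r) (v : ν) (h : ρ.lab i.succ v = Sum.inl 0) :
    ρ.lab i.castSucc v = Sum.inl 0 := by
  rcases pn_step_cases ρ i v with ⟨hv, hb⟩ | heq | ⟨hv, hl, hE, hr⟩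
  · rcases hc : ρ.lab i.castSucc v with k | j | u <;> rw [hc, h] at hb <;>
      rcases hm : ρ.msg i with _ | j' <;> rw [hm] at hb <;>
      simp only [PnBr] at hb
    · obtain ⟨hk, hq⟩ := hb
      exact hq.symm
    · obtain ⟨hk, h2, hq⟩ := hb
      exact absurd hq (fun hc => by have := congrArg Fin.val (Sum.inl.inj hc); simp only [Fin.val_zero] at this; omega)
  · rw [← heq, h]
  · rcases hc : ρ.lab i.castSucc v with k | j | u <;> rw [hc, h] at hr <;>
      rcases hm : ρ.msg i with _ | j' <;> rw [hm] at hr <;>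
      simp only [PnRcv] at hr
    · rcases hr with ⟨_, _, hq⟩ | ⟨_, hq⟩
      · exact absurd hq (fun hc => by have := congrArg Fin.val (Sum.inl.inj hc); simp only [Fin.val_zero] at this; omega)
      · exact hq.symm
    · rcases hr with ⟨_, hq⟩ | ⟨_, _, hq⟩ | ⟨hk, hq⟩
      · exact absurd hq (by simp)
      · exact absurd hq (by simp)
      · rw [Sum.inl.injEq] at hq
        exact absurd (by rw [← hq]; rfl) hk
    · exact absurd hr (by simp)
    · rcases hr with ⟨_, _, hq⟩ | ⟨_, hq⟩ <;> exact absurd hq (by simp)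
    · exact absurd hr (by simp)
    · exact absurd hr (by simp)

/-- `q₀` backward persistence. -/
lemma pn_q0_back {T T' : Fin (r + 1)} (h : T ≤ T') (v : ν)
    (h' : ρ.lab T' v = Sum.inl 0) : ρ.lab T v = Sum.inl 0 := by
  induction T' using Fin.induction with
  | zero =>
    have : T = 0 := le_antisymm h (Fin.zero_le T)
    rw [this]; exact h'
  | succ i ih =>
    by_cases hT : T = i.succ
    · rw [hT]; exact h'
    · have hle : T ≤ i.castSucc := by
        have h1 : (T : ℕ) ≤ (i : ℕ) + 1 := h
        have h2 : (T : ℕ) ≠ (i : ℕ) + 1 := fun hc => hT (Fin.ext hc)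
        exact Fin.le_def.mpr (by simp [Fin.coe_castSucc]; omega)
      exact ih hle (pn_q0_step ρ i v h')

/-- While in the `q`-chain, the index is nondecreasing (one step, backwards). -/
lemma pn_inl_step (i : Fin r) (v : ν) (k' : Fin (2 * n + 1))
    (h : ρ.lab i.succ v = Sum.inl k') :
    ∃ k : Fin (2 * n + 1), ρ.lab i.castSucc v = Sum.inl k ∧ (k : ℕ) ≤ (k' : ℕ) := by
  rcases pn_step_cases ρ i v with ⟨hv, hb⟩ | heq | ⟨hv, hl, hE, hr⟩
  · rcases hc : ρ.lab i.castSucc v with k | j | u <;> rw [hc, h] at hb <;>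
      rcases hm : ρ.msg i with _ | j' <;> rw [hm] at hb <;>
      simp only [PnBr] at hb
    · obtain ⟨hk, hq⟩ := hb
      rw [Sum.inl.injEq] at hq
      exact ⟨k, rfl, le_of_eq (congrArg Fin.val hq.symm)⟩
    · obtain ⟨hk, h2, hq⟩ := hb
      rw [Sum.inl.injEq] at hq
      have : (k' : ℕ) = (k : ℕ) + 1 := congrArg Fin.val hq
      exact ⟨k, rfl, by omega⟩
  · rw [← heq, h]; exact ⟨k', rfl, le_refl _⟩
  · rcases hc : ρ.lab i.castSucc v with k | j | u <;> rw [hc, h] at hr <;>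
      rcases hm : ρ.msg i with _ | j' <;> rw [hm] at hr <;>
      simp only [PnRcv] at hr
    · rcases hr with ⟨_, _, hq⟩ | ⟨_, hq⟩
      · rw [Sum.inl.injEq] at hq
        have := congrArg Fin.val hq.symm
        simp at this
        exact ⟨k, rfl, by omega⟩
      · rw [Sum.inl.injEq] at hq
        exact ⟨k, rfl, le_of_eq (congrArg Fin.val hq.symm)⟩
    · rcases hr with ⟨_, hq⟩ | ⟨_, _, hq⟩ | ⟨hk, hq⟩
      · exact absurd hq (by simp)
      · exact absurd hq (by simp)
      · rw [Sum.inl.injEq] at hq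
        exact ⟨k, rfl, le_of_eq (congrArg Fin.val hq.symm)⟩
    · exact absurd hr (by simp)
    · rcases hr with ⟨_, _, hq⟩ | ⟨_, hq⟩ <;> exact absurd hq (by simp)
    · exact absurd hr (by simp)
    · exact absurd hr (by simp)

/-- `q`-chain index monotonicity, backwards over time. -/
lemma pn_inl_back {T T' : Fin (r + 1)} (h : T ≤ T') (v : ν) (k' : Fin (2 * n + 1))
    (h' : ρ.lab T' v = Sum.inl k') :
    ∃ k : Fin (2 * n + 1), ρ.lab T v = Sum.inl k ∧ (k : ℕ) ≤ (k' : ℕ) := by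
  induction T' using Fin.induction generalizing k' with
  | zero =>
    have : T = 0 := le_antisymm h (Fin.zero_le T)
    rw [this]; exact ⟨k', h', le_refl _⟩
  | succ i ih =>
    by_cases hT : T = i.succ
    · rw [hT]; exact ⟨k', h', le_refl _⟩
    · have hle : T ≤ i.castSucc := by
        have h1 : (T : ℕ) ≤ (i : ℕ) + 1 := h
        have h2 : (T : ℕ) ≠ (i : ℕ) + 1 := fun hc => hT (Fin.ext hc)
        exact Fin.le_def.mpr (by simp [Fin.coe_castSucc]; omega)
      obtain ⟨m, hm, hmle⟩ := pn_inl_step ρ i v k' h'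
      obtain ⟨k, hk, hkle⟩ := ih hle m hm
      exact ⟨k, hk, le_trans hkle hmle⟩

/-- A sender of message `some j` (i.e. `b_{j+1}`) is in state `q_{2j+1}` before
and `q_{2j+2}` after. -/
lemma pn_sender_some (i : Fin r) (j : Fin n) (h : ρ.msg i = some j) :
    ρ.lab i.castSucc (ρ.sender i) = Sum.inl ⟨2 * (j : ℕ) + 1, by have := j.isLt; omega⟩ ∧
    ρ.lab i.succ (ρ.sender i) = Sum.inl ⟨2 * (j : ℕ) + 2, by have := j.isLt; omega⟩ := by
  have hb : PnBr n (ρ.lab i.castSucc (ρ.sender i)) (ρ.msg i) (ρ.lab i.succ (ρ.sender i)) :=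
    ρ.step_br i
  rw [h] at hb
  rcases hc : ρ.lab i.castSucc (ρ.sender i) with k | j2 | u <;> rw [hc] at hb <;>
    simp only [PnBr] at hb
  obtain ⟨hk, h2, hq⟩ := hb
  constructor
  · exact congrArg Sum.inl (Fin.ext hk)
  · rw [hq]
    exact congrArg Sum.inl (Fin.ext (show (k : ℕ) + 1 = 2 * (j : ℕ) + 2 by omega))

/-- A sender of message `none` (i.e. `a`) is in state `q₀`. -/
lemma pn_sender_none (i : Fin r) (h : ρ.msg i = none) :
    ρ.lab i.castSucc (ρ.sender i) = Sum.inl 0 := by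
  have hb : PnBr n (ρ.lab i.castSucc (ρ.sender i)) (ρ.msg i) (ρ.lab i.succ (ρ.sender i)) :=
    ρ.step_br i
  rw [h] at hb
  rcases hc : ρ.lab i.castSucc (ρ.sender i) with k | j2 | u <;> rw [hc] at hb <;>
    simp only [PnBr] at hb
  obtain ⟨hk, hq⟩ := hb
  exact congrArg Sum.inl (Fin.ext hk)

/-- A step where a node moves within the `q`-chain from an even state is a
non-lost reception of `a` from an adjacent node in state `q₀`. -/
lemma pn_even_odd_step (i : Fin r) (v : ν) (k k' : Fin (2 * n + 1))
    (hc : ρ.lab i.castSucc v = Sum.inl k) (hs : ρ.lab i.succ v = Sum.inl k')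
    (hk : (k : ℕ) % 2 = 0) (hne : (k' : ℕ) ≠ (k : ℕ)) :
    ρ.lost i = false ∧ v ≠ ρ.sender i ∧ ρ.E (ρ.sender i) v ∧
      ρ.lab i.castSucc (ρ.sender i) = Sum.inl 0 := by
  rcases pn_step_cases ρ i v with ⟨hv, hb⟩ | heq | ⟨hv, hl, hE, hr⟩
  · rw [hc, hs] at hb
    rcases hm : ρ.msg i with _ | j' <;> rw [hm] at hb <;> simp only [PnBr] at hb
    · obtain ⟨_, hq⟩ := hb
      rw [Sum.inl.injEq] at hq
      exact absurd (congrArg Fin.val hq) hne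
    · obtain ⟨hk2, _, _⟩ := hb
      omega
  · rw [hc, hs, Sum.inl.injEq] at heq
    exact absurd (congrArg Fin.val heq) hne
  · refine ⟨hl, hv, hE, ?_⟩
    rcases hm : ρ.msg i with _ | j'
    · exact pn_sender_none ρ i hm
    · exfalso
      rw [hc, hs, hm] at hr
      simp only [PnRcv] at hr
      rcases hr with ⟨_, hq⟩ | ⟨_, _, hq⟩ | ⟨_, hq⟩
      · exact absurd hq (by simp)
      · exact absurd hq (by simp)
      · rw [Sum.inl.injEq] at hq
        exact hne (congrArg Fin.val hq)

/-- Between an even `q`-state and a later odd `q`-state, the node must perform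
a non-lost reception of `a` from an adjacent node in state `q₀`. -/
lemma pn_exists_a_step {T T' : Fin (r + 1)} (h : T ≤ T') (v : ν)
    (k k' : Fin (2 * n + 1)) (hT : ρ.lab T v = Sum.inl k)
    (hT' : ρ.lab T' v = Sum.inl k') (hk : (k : ℕ) % 2 = 0) (hk' : (k' : ℕ) % 2 = 1) :
    ∃ t : Fin r, T ≤ t.castSucc ∧ ρ.lost t = false ∧ v ≠ ρ.sender t ∧
      ρ.E (ρ.sender t) v ∧ ρ.lab t.castSucc (ρ.sender t) = Sum.inl 0 := by
  induction T' using Fin.induction generalizing k' with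
  | zero =>
    have hT0 : T = 0 := le_antisymm h (Fin.zero_le T)
    rw [hT0, hT'] at hT
    rw [Sum.inl.injEq] at hT
    have := congrArg Fin.val hT
    omega
  | succ i ih =>
    by_cases hTi : T = i.succ
    · rw [hTi, hT'] at hT
      rw [Sum.inl.injEq] at hT
      have := congrArg Fin.val hT
      omega
    · have hle : T ≤ i.castSucc := by
        have h1 : (T : ℕ) ≤ (i : ℕ) + 1 := h
        have h2 : (T : ℕ) ≠ (i : ℕ) + 1 := fun hc => hTi (Fin.ext hc)
        exact Fin.le_def.mpr (by simp [Fin.coe_castSucc]; omega)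
      obtain ⟨m, hm, _⟩ := pn_inl_step ρ i v k' hT'
      rcases Nat.even_or_odd (m : ℕ) with hpar | hpar
      · have hpar' : (m : ℕ) % 2 = 0 := Nat.even_iff.mp hpar
        obtain ⟨hl, hv, hE, hq0⟩ := pn_even_odd_step ρ i v m k' hm hT' hpar' (by omega)
        exact ⟨i, hle, hl, hv, hE, hq0⟩
      · exact ih hle m hm (Nat.odd_iff.mp hpar)

/-- If a node is in `r`-state `j` at time `T`, then for every `j' ≤ j` there was a
non-lost broadcast of `b_{j'+1}` from an adjacent node in state `q_{2j'+1}`. -/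
lemma pn_reach_r (T : Fin (r + 1)) (v : ν) (j : Fin n)
    (h : ρ.lab T v = Sum.inr (Sum.inl j)) :
    ∀ j' : Fin n, (j' : ℕ) ≤ (j : ℕ) → ∃ t : Fin r, ρ.lost t = false ∧
      ρ.msg t = some j' ∧ v ≠ ρ.sender t ∧ ρ.E (ρ.sender t) v ∧
      ρ.lab t.castSucc (ρ.sender t) = Sum.inl ⟨2 * (j' : ℕ) + 1, by have := j'.isLt; omega⟩ := by
  induction T using Fin.induction generalizing j with
  | zero =>
    exfalso
    have := ρ.init v
    simp only [PnProt, Finset.mem_singleton] at this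
    rw [this] at h
    exact absurd h (by simp)
  | succ i ih =>
    rcases pn_step_cases ρ i v with ⟨hv, hb⟩ | heq | ⟨hv, hl, hE, hr⟩
    · exfalso
      rcases hc : ρ.lab i.castSucc v with k | j2 | u <;> rw [hc, h] at hb <;>
        rcases hm : ρ.msg i with _ | j' <;> rw [hm] at hb <;>
        simp only [PnBr] at hb
      · exact absurd hb.2 (by simp)
      · obtain ⟨_, _, hq⟩ := hb
        exact absurd hq (by simp)
    · rw [h] at heq
      exact ih j heq.symm
    · rcases hc : ρ.lab i.castSucc v with k | j2 | u <;> rw [hc, h] at hr <;>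
        rcases hm : ρ.msg i with _ | mi <;> rw [hm] at hr <;>
        simp only [PnRcv] at hr
      · exfalso
        rcases hr with ⟨_, _, hq⟩ | ⟨_, hq⟩ <;> exact absurd hq (by simp)
      · rcases hr with ⟨_, hq⟩ | ⟨hk0, hmi0, hq⟩ | ⟨_, hq⟩
        · exact absurd hq (by simp)
        · -- climbed into r-state 0 : here j = ⟨0,_⟩ and msg = some mi with mi = 0
          rw [Sum.inr.injEq, Sum.inl.injEq] at hq
          have hj0 : (j : ℕ) = 0 := congrArg Fin.val hq
          intro j' hj'
          have hj'0 : (j' : ℕ) = 0 := by omega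
          have hmij' : mi = j' := Fin.ext (by omega)
          exact ⟨i, hl, by rw [hm, hmij'], hv, hE, (pn_sender_some ρ i j' (hmij' ▸ hm)).1⟩
        · exact absurd hq (by simp)
      · rw [Sum.inr.injEq, Sum.inl.injEq] at hr
        intro j' hj'
        refine ih j2 hc j' ?_
        rw [← hr]
        exact hj'
      · rcases hr with ⟨hmi, hlt, hq⟩ | ⟨_, hq⟩
        · -- climbed from r-state j2 to r-state j2+1 = j via msg some mi
          rw [Sum.inr.injEq, Sum.inl.injEq] at hq
          have hjval : (j : ℕ) = (j2 : ℕ) + 1 := congrArg Fin.val hq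
          intro j' hj'
          by_cases hcase : (j' : ℕ) = (j : ℕ)
          · have hmij' : mi = j' := Fin.ext (by omega)
            exact ⟨i, hl, by rw [hm, hmij'], hv, hE, (pn_sender_some ρ i j' (hmij' ▸ hm)).1⟩
          · exact ih j2 hc j' (by omega)
        · rw [Sum.inr.injEq, Sum.inl.injEq] at hq
          intro j' hj'
          refine ih j2 hc j' ?_
          rw [← hq]
          exact hj'
      · exact absurd hr (by simp)
      · exact absurd hr (by simp)

/-- A node cannot send two different (non-lost, received) `b`-messages. -/
lemma pn_no_reuse (tj tk : Fin r) (j k : Fin n) (hjk : (j : ℕ) < (k : ℕ))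
    (hmj : ρ.msg tj = some j) (hmk : ρ.msg tk = some k)
    (hlj : ρ.lost tj = false) (hs : ρ.sender tj = ρ.sender tk) : False := by
  obtain ⟨hcj, hsj⟩ := pn_sender_some ρ tj j hmj
  obtain ⟨hck, _⟩ := pn_sender_some ρ tk k hmk
  rw [← hs] at hck
  -- ordering: tj.succ ≤ tk.castSucc
  have horder : (tj.succ : Fin (r + 1)) ≤ tk.castSucc := by
    by_contra hcon
    push_neg at hcon
    have h1 : (tk : ℕ) < (tj : ℕ) + 1 := hcon
    have hle : (tk.castSucc : Fin (r + 1)) ≤ tj.castSucc := Fin.le_def.mpr (by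
      simp only [Fin.coe_castSucc]; omega)
    obtain ⟨m, hm, hle2⟩ := pn_inl_back ρ hle (ρ.sender tj) _ hcj
    rw [hck, Sum.inl.injEq] at hm
    have hval : 2 * (k : ℕ) + 1 = (m : ℕ) := congrArg Fin.val hm
    have hle2' : (m : ℕ) ≤ 2 * (j : ℕ) + 1 := hle2
    omega
  -- between tj.succ (even state) and tk.castSucc (odd state),
  -- the sender receives a non-lost `a` from an adjacent node in q₀
  obtain ⟨t, ht1, htl, htv, htE, htq0⟩ :=
    pn_exists_a_step ρ horder (ρ.sender tj) _ _ hsj hck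
      (show (2 * (j : ℕ) + 2) % 2 = 0 by omega)
      (show (2 * (k : ℕ) + 1) % 2 = 1 by omega)
  -- that node is in q₀ already at time tj.succ
  have hu_q0 : ρ.lab tj.succ (ρ.sender t) = Sum.inl 0 := pn_q0_back ρ ht1 _ htq0
  -- but it received the non-lost broadcast of `some j` at step tj
  have huv : ρ.sender t ≠ ρ.sender tj := fun hcon => htv hcon.symm
  have huE : ρ.E (ρ.sender tj) (ρ.sender t) := ρ.E_symm htE
  have hrcv : PnRcv n (ρ.lab tj.castSucc (ρ.sender t)) (ρ.msg tj)
      (ρ.lab tj.succ (ρ.sender t)) := (ρ.step_real tj hlj _ huv).1 huE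
  rw [hmj, hu_q0] at hrcv
  rcases hc : ρ.lab tj.castSucc (ρ.sender t) with k2 | j2 | uu <;> rw [hc] at hrcv <;>
    simp only [PnRcv] at hrcv
  · rcases hrcv with ⟨_, hq⟩ | ⟨_, _, hq⟩ | ⟨hk2, hq⟩
    · exact absurd hq (by simp)
    · exact absurd hq (by simp)
    · rw [Sum.inl.injEq] at hq
      exact hk2 (congrArg Fin.val hq.symm)
  · rcases hrcv with ⟨_, _, hq⟩ | ⟨_, hq⟩ <;> exact absurd hq (by simp)
  · exact absurd hrcv (by simp)

end AuxLemmas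

/-- **Succinctness of reconfigurable semantics, lower bound for lossy executions.**
For every `n ≥ 1`, every lossy execution of `P_n` covering `{☺}` has at least
`n + 1` nodes. -/
theorem lossy_cover_needs_linearly_many_nodes (n : ℕ) (hn : 1 ≤ n)
    (ν : Type) [Fintype ν] [DecidableEq ν] (r : ℕ) (ρ : LExec (PnProt n) ν r)
    (h : ρ.Covers {PnSmiley n hn}) :
    n + 1 ≤ Fintype.card ν := by
  obtain ⟨w, hw⟩ := h
  rw [Set.mem_singleton_iff] at hw
  have hw' : ρ.lab (Fin.last r) w = Sum.inr (Sum.inl ⟨n - 1, by omega⟩) := hw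
  have H : ∀ j : Fin n, ∃ t : Fin r, ρ.lost t = false ∧ ρ.msg t = some j ∧
      w ≠ ρ.sender t ∧ ρ.E (ρ.sender t) w ∧
      ρ.lab t.castSucc (ρ.sender t) = Sum.inl ⟨2 * (j : ℕ) + 1, by have := j.isLt; omega⟩ := by
    intro j
    exact pn_reach_r ρ (Fin.last r) w ⟨n - 1, by omega⟩ hw' j (by have := j.isLt; simp; omega)
  choose T hl hm hne hE hstate using H
  have hinj : Function.Injective (fun j : Fin n => ρ.sender (T j)) := by
    intro j k hjk
    simp only at hjk
    by_contra hne2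
    rcases lt_trichotomy ((j : ℕ)) ((k : ℕ)) with hlt | heq | hgt
    · exact pn_no_reuse ρ (T j) (T k) j k hlt (hm j) (hm k) (hl j) hjk
    · exact hne2 (Fin.ext heq)
    · exact pn_no_reuse ρ (T k) (T j) k j hgt (hm k) (hm j) (hl k) hjk.symm
  have hnew : ∀ j : Fin n, ρ.sender (T j) ≠ w := by
    intro j hcon
    have := hE j
    rw [hcon] at this
    exact ρ.E_irrefl w this
  have hcard : (Finset.image (fun j : Fin n => ρ.sender (T j)) Finset.univ).card = n := by
    rw [Finset.card_image_of_injective _ hinj, Finset.card_univ, Fintype.card_fin]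
  have hwnot : w ∉ Finset.image (fun j : Fin n => ρ.sender (T j)) Finset.univ := by
    simp only [Finset.mem_image, Finset.mem_univ, true_and]
    rintro ⟨j, hj⟩
    exact hnew j hj
  calc n + 1 = (insert w (Finset.image (fun j : Fin n => ρ.sender (T j)) Finset.univ)).card := by
        rw [Finset.card_insert_of_notMem hwnot, hcard]
    _ ≤ (Finset.univ : Finset ν).card := Finset.card_le_univ _
    _ = Fintype.card ν := Finset.card_univ
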